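/- Let E and F be real inner product spaces, T ≥ 1, and R : E × F → ℝ differentiable in each variable, convex in the first variable for each fixed second argument, concave in the second variable for each fixed first argument. Let G_θ, G_q ≥ 0 bound the gradients: ‖∇_θ R(θ_t, q_t)‖ ≤ G_θ and ‖∇_q R(θ_t, q_t)‖ ≤ G_q along the iterates. Run gradient descent-ascent with step size η = 1/√T: θ_{t+1} = θ_t − η·∇_θ R(θ_t, q_t), q_{t+1} = q_t + η·∇_q R(θ_t, q_t). Then for the averaged iterates θ̄ = (1/T)∑_t θ_t, q̄ = (1/T)∑_t q_t and for all θ ∈ E, q ∈ F: R(θ̄, q) − R(θ, q̄) ≤ (‖θ_1 − θ‖² + ‖q_1 − q‖² + G_θ² + G_q²)/(2√T). -/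

import Mathlib

open Finset

local notation "⟪" x ", " y "⟫" => @inner ℝ _ _ x y

/-- Gradient inequality for convex functions: `f x - f y ≤ ⟪∇f x, x - y⟫`. -/
lemma convex_grad_ineq {E : Type*} [NormedAddCommGroup E] [InnerProductSpace ℝ E]
    [CompleteSpace E] {f : E → ℝ} {g x : E} (hf : ConvexOn ℝ Set.univ f) (hg : HasGradientAt f g x)
    (y : E) : f x - f y ≤ ⟪g, x - y⟫ := by
  have hφconv : ConvexOn ℝ Set.univ (f ∘ (AffineMap.lineMap x y : ℝ →ᵃ[ℝ] E)) := by
    have := hf.comp_affineMap (AffineMap.lineMap x y : ℝ →ᵃ[ℝ] E)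
    simpa using this
  -- derivative of t ↦ f (lineMap x y t) at 0 is ⟪g, y - x⟫
  have hline : HasDerivAt (fun t : ℝ => (AffineMap.lineMap x y : ℝ →ᵃ[ℝ] E) t) (y - x) 0 := by
    have h1 := (((hasDerivAt_const (0:ℝ) (1:ℝ)).sub (hasDerivAt_id 0)).smul_const x).add
      ((hasDerivAt_id (0:ℝ)).smul_const y)
    have h2 : ((0:ℝ) - 1) • x + (1 : ℝ) • y = y - x := by
      rw [zero_sub, neg_smul, one_smul, one_smul, neg_add_eq_sub]
    rw [h2] at h1
    simpa [AffineMap.lineMap_apply_module, id_eq, Pi.add_def] using h1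
  have hφ : HasDerivAt (f ∘ (AffineMap.lineMap x y : ℝ →ᵃ[ℝ] E)) ⟪g, y - x⟫ 0 := by
    have hx0 : (AffineMap.lineMap x y : ℝ →ᵃ[ℝ] E) (0 : ℝ) = x := by
      simp [AffineMap.lineMap_apply_module]
    have hfd : HasFDerivAt f (InnerProductSpace.toDual ℝ E g : E →L[ℝ] ℝ) x :=
      hg.hasFDerivAt
    rw [← hx0] at hfd
    have := hfd.comp_hasDerivAt (0 : ℝ) hline
    simpa [InnerProductSpace.toDual_apply_apply] using this
  have hslope := hφconv.le_slope_of_hasDerivAt (Set.mem_univ (0 : ℝ))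
    (Set.mem_univ (1 : ℝ)) one_pos hφ
  have h0 : (f ∘ (AffineMap.lineMap x y : ℝ →ᵃ[ℝ] E)) 0 = f x := by
    simp [AffineMap.lineMap_apply_module]
  have h1 : (f ∘ (AffineMap.lineMap x y : ℝ →ᵃ[ℝ] E)) 1 = f y := by
    simp [AffineMap.lineMap_apply_module]
  rw [slope_def_field, h0, h1] at hslope
  have : ⟪g, y - x⟫ ≤ f y - f x := by
    simpa [div_one] using hslope
  have hxy : (⟪g, x - y⟫ : ℝ) = -⟪g, y - x⟫ := by
    have h : x - y = -(y - x) := by abel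
    rw [h, inner_neg_right]
  linarith [this, hxy.ge, hxy.le]

/-- **Duality-gap bound for gradient descent-ascent (deterministic Theorem 1).**
For a convex-concave differentiable `R : E → F → ℝ` with gradients bounded by
`Gθ` and `Gq` along the iterates, gradient descent-ascent with step size
`η = 1/√T` yields averaged iterates `θ̄, q̄` with
`R(θ̄, q) - R(θ, q̄) ≤ (‖θ_1 - θ‖² + ‖q_1 - q‖² + Gθ² + Gq²)/(2√T)` for all `θ, q`. -/
theorem gda_duality_gap {E F : Type*} [NormedAddCommGroup E] [InnerProductSpace ℝ E]
    [CompleteSpace E] [NormedAddCommGroup F] [InnerProductSpace ℝ F] [CompleteSpace F]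
    (T : ℕ) (hT : 1 ≤ T)
    (R : E → F → ℝ) (gθ : E → F → E) (gq : E → F → F)
    (hconv : ∀ q : F, ConvexOn ℝ Set.univ (fun θ => R θ q))
    (hconc : ∀ θ : E, ConcaveOn ℝ Set.univ (fun q => R θ q))
    (hdiffθ : ∀ (θ : E) (q : F), HasGradientAt (fun θ' => R θ' q) (gθ θ q) θ)
    (hdiffq : ∀ (θ : E) (q : F), HasGradientAt (fun q' => R θ q') (gq θ q) q)
    (Gθ Gq : ℝ) (hGθ : 0 ≤ Gθ) (hGq : 0 ≤ Gq)
    (η : ℝ) (hη : η = 1 / Real.sqrt T)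
    (θseq : ℕ → E) (qseq : ℕ → F)
    (hstepθ : ∀ t, θseq (t + 1) = θseq t - η • gθ (θseq t) (qseq t))
    (hstepq : ∀ t, qseq (t + 1) = qseq t + η • gq (θseq t) (qseq t))
    (hbndθ : ∀ t ∈ Finset.Icc 1 T, ‖gθ (θseq t) (qseq t)‖ ≤ Gθ)
    (hbndq : ∀ t ∈ Finset.Icc 1 T, ‖gq (θseq t) (qseq t)‖ ≤ Gq)
    (θbar : E) (qbar : F)
    (hθbar : θbar = (T : ℝ)⁻¹ • ∑ t ∈ Finset.Icc 1 T, θseq t)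
    (hqbar : qbar = (T : ℝ)⁻¹ • ∑ t ∈ Finset.Icc 1 T, qseq t) :
    ∀ (θ : E) (q : F),
      R θbar q - R θ qbar ≤
        (‖θseq 1 - θ‖ ^ 2 + ‖qseq 1 - q‖ ^ 2 + Gθ ^ 2 + Gq ^ 2) /
          (2 * Real.sqrt T) := by
  intro θ q
  have hTpos : (0 : ℝ) < T := by exact_mod_cast Nat.lt_of_lt_of_le Nat.zero_lt_one hT
  have hsq : (0 : ℝ) < Real.sqrt T := Real.sqrt_pos.mpr hTpos
  have hsqsq : Real.sqrt T * Real.sqrt T = T := Real.mul_self_sqrt hTpos.le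
  have hηpos : 0 < η := by rw [hη]; positivity
  set A : ℕ → ℝ := fun t => ‖θseq t - θ‖ ^ 2 with hA
  set B : ℕ → ℝ := fun t => ‖qseq t - q‖ ^ 2 with hB
  -- per-step bound
  have key : ∀ t ∈ Finset.Icc 1 T,
      R (θseq t) q - R θ (qseq t) ≤
        (A t - A (t + 1) + (B t - B (t + 1))) / (2 * η) + η * (Gθ ^ 2 + Gq ^ 2) / 2 := by
    intro t ht
    set u := θseq t
    set v := qseq t
    set a := gθ u v
    set b := gq u v
    -- convexity in θ
    have h1 : R u v - R θ v ≤ ⟪a, u - θ⟫ :=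
      convex_grad_ineq (hconv v) (hdiffθ u v) θ
    -- concavity in q: apply convexity to the negation
    have h2 : R u q - R u v ≤ ⟪b, q - v⟫ := by
      have hneg : ConvexOn ℝ Set.univ (fun q' => -(R u q')) := (hconc u).neg
      have hgrad : HasGradientAt (fun q' => -(R u q')) (-b) v := by
        rw [hasGradientAt_iff_hasFDerivAt]
        have hfd := (hdiffq u v).hasFDerivAt.neg
        rw [map_neg]
        exact hfd
      have := convex_grad_ineq hneg hgrad q
      have hinner : (⟪-b, v - q⟫ : ℝ) = ⟪b, q - v⟫ := by
        rw [inner_neg_left, ← inner_neg_right, neg_sub]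
      rw [hinner] at this
      linarith
    -- descent identity
    have eA : A (t + 1) = A t - 2 * η * ⟪a, u - θ⟫ + η ^ 2 * ‖a‖ ^ 2 := by
      have : θseq (t + 1) - θ = (u - θ) - η • a := by
        rw [hstepθ t]; abel
      rw [hA]
      simp only [this]
      rw [@norm_sub_sq_real, real_inner_smul_right, norm_smul, real_inner_comm]
      simp [abs_of_pos hηpos, mul_pow]
      ring
    have eB : B (t + 1) = B t - 2 * η * ⟪b, q - v⟫ + η ^ 2 * ‖b‖ ^ 2 := by
      have : qseq (t + 1) - q = (v - q) + η • b := by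
        rw [hstepq t]; abel
      rw [hB]
      simp only [this]
      rw [@norm_add_sq_real, real_inner_smul_right, norm_smul, real_inner_comm]
      have hvq : (⟪b, v - q⟫ : ℝ) = -⟪b, q - v⟫ := by
        rw [← inner_neg_right, neg_sub]
      simp [abs_of_pos hηpos, mul_pow, hvq]
      ring
    have hna : ‖a‖ ^ 2 ≤ Gθ ^ 2 := by
      have := hbndθ t ht
      exact pow_le_pow_left₀ (norm_nonneg _) this 2
    have hnb : ‖b‖ ^ 2 ≤ Gq ^ 2 := by
      have := hbndq t ht
      exact pow_le_pow_left₀ (norm_nonneg _) this 2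
    have ea' : ⟪a, u - θ⟫ = (A t - A (t + 1)) / (2 * η) + η * ‖a‖ ^ 2 / 2 := by
      field_simp
      linarith [eA]
    have eb' : ⟪b, q - v⟫ = (B t - B (t + 1)) / (2 * η) + η * ‖b‖ ^ 2 / 2 := by
      field_simp
      linarith [eB]
    have := add_le_add h1 h2
    rw [ea', eb'] at this
    have ha' : η * ‖a‖ ^ 2 ≤ η * Gθ ^ 2 := mul_le_mul_of_nonneg_left hna hηpos.le
    have hb' : η * ‖b‖ ^ 2 ≤ η * Gq ^ 2 := mul_le_mul_of_nonneg_left hnb hηpos.le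
    have hsplit : (A t - A (t + 1) + (B t - B (t + 1))) / (2 * η)
        = (A t - A (t + 1)) / (2 * η) + (B t - B (t + 1)) / (2 * η) := by ring
    rw [hsplit]
    linarith
  -- sum the per-step bound
  have hsum : ∑ t ∈ Finset.Icc 1 T, (R (θseq t) q - R θ (qseq t)) ≤
      (A 1 + B 1) / (2 * η) + T * (η * (Gθ ^ 2 + Gq ^ 2) / 2) := by
    have h1 := Finset.sum_le_sum key
    have htel : ∑ t ∈ Finset.Icc 1 T,
        ((A t - A (t + 1) + (B t - B (t + 1))) / (2 * η) + η * (Gθ ^ 2 + Gq ^ 2) / 2)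
        = (A 1 - A (T + 1) + (B 1 - B (T + 1))) / (2 * η)
          + T * (η * (Gθ ^ 2 + Gq ^ 2) / 2) := by
      rw [Finset.sum_add_distrib, Finset.sum_const, Nat.card_Icc]
      have hIcc : ∀ f : ℕ → ℝ, ∑ t ∈ Finset.Icc 1 T, f t = ∑ i ∈ Finset.range T, f (1 + i) := by
        intro f
        rw [← Finset.Ico_add_one_right_eq_Icc, Finset.sum_Ico_eq_sum_range]
        simp
      rw [hIcc]
      have : ∑ i ∈ Finset.range T,
          (A (1 + i) - A (1 + i + 1) + (B (1 + i) - B (1 + i + 1))) / (2 * η)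
          = (∑ i ∈ Finset.range T,
              ((fun j => A (1 + j) + B (1 + j)) i - (fun j => A (1 + j) + B (1 + j)) (i + 1)))
            / (2 * η) := by
        rw [← Finset.sum_div]
        congr 1
        apply Finset.sum_congr rfl
        intro i _
        have : 1 + i + 1 = 1 + (i + 1) := by omega
        rw [this]
        ring
      rw [this, Finset.sum_range_sub' (fun j => A (1 + j) + B (1 + j)) T]
      simp only [Nat.add_sub_cancel, nsmul_eq_mul]
      have h1T : 1 + T = T + 1 := by omega
      rw [h1T]
      ring
    calc ∑ t ∈ Finset.Icc 1 T, (R (θseq t) q - R θ (qseq t)) ≤ _ := h1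
      _ = (A 1 - A (T + 1) + (B 1 - B (T + 1))) / (2 * η)
          + T * (η * (Gθ ^ 2 + Gq ^ 2) / 2) := htel
      _ ≤ (A 1 + B 1) / (2 * η) + T * (η * (Gθ ^ 2 + Gq ^ 2) / 2) := by
          have hA1 : 0 ≤ A (T + 1) := by rw [hA]; positivity
          have hB1 : 0 ≤ B (T + 1) := by rw [hB]; positivity
          have hpos : 0 < 2 * η := by positivity
          have hnum : A 1 - A (T + 1) + (B 1 - B (T + 1)) ≤ A 1 + B 1 := by linarith
          gcongr
          all_goals linarith
  -- Jensen
  have hw0 : ∀ i ∈ Finset.Icc 1 T, (0 : ℝ) ≤ (T : ℝ)⁻¹ := fun _ _ => by positivity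
  have hw1 : ∑ _i ∈ Finset.Icc 1 T, (T : ℝ)⁻¹ = 1 := by
    rw [Finset.sum_const, Nat.card_Icc, Nat.add_sub_cancel, nsmul_eq_mul]
    field_simp
  have hmemθ : ∀ i ∈ Finset.Icc 1 T, θseq i ∈ Set.univ := fun _ _ => Set.mem_univ _
  have hmemq : ∀ i ∈ Finset.Icc 1 T, qseq i ∈ Set.univ := fun _ _ => Set.mem_univ _
  have hJ1 : R θbar q ≤ ∑ t ∈ Finset.Icc 1 T, (T : ℝ)⁻¹ * R (θseq t) q := by
    have := (hconv q).map_sum_le hw0 hw1 hmemθ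
    have hb : θbar = ∑ i ∈ Finset.Icc 1 T, (T : ℝ)⁻¹ • θseq i := by
      rw [hθbar, Finset.smul_sum]
    rw [hb]
    simpa using this
  have hJ2 : ∑ t ∈ Finset.Icc 1 T, (T : ℝ)⁻¹ * R θ (qseq t) ≤ R θ qbar := by
    have := (hconc θ).le_map_sum hw0 hw1 hmemq
    have hb : qbar = ∑ i ∈ Finset.Icc 1 T, (T : ℝ)⁻¹ • qseq i := by
      rw [hqbar, Finset.smul_sum]
    rw [hb]
    simpa using this
  have hgap : R θbar q - R θ qbar ≤
      (T : ℝ)⁻¹ * ∑ t ∈ Finset.Icc 1 T, (R (θseq t) q - R θ (qseq t)) := by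
    rw [Finset.mul_sum]
    have : ∑ t ∈ Finset.Icc 1 T, (T : ℝ)⁻¹ * (R (θseq t) q - R θ (qseq t))
        = ∑ t ∈ Finset.Icc 1 T, (T : ℝ)⁻¹ * R (θseq t) q
          - ∑ t ∈ Finset.Icc 1 T, (T : ℝ)⁻¹ * R θ (qseq t) := by
      rw [← Finset.sum_sub_distrib]
      apply Finset.sum_congr rfl
      intro i _
      ring
    rw [this]
    linarith
  -- combine
  have hfinal : (T : ℝ)⁻¹ * ((A 1 + B 1) / (2 * η) + T * (η * (Gθ ^ 2 + Gq ^ 2) / 2))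
      = (A 1 + B 1 + Gθ ^ 2 + Gq ^ 2) / (2 * Real.sqrt T) := by
    have h3 : Real.sqrt T ^ 3 = Real.sqrt T * T := by
      rw [pow_succ, pow_two, hsqsq, mul_comm]
    rw [hη]
    field_simp
    ring_nf
    rw [Real.sq_sqrt hTpos.le]
  have hmul : (T : ℝ)⁻¹ * ∑ t ∈ Finset.Icc 1 T, (R (θseq t) q - R θ (qseq t))
      ≤ (T : ℝ)⁻¹ * ((A 1 + B 1) / (2 * η) + T * (η * (Gθ ^ 2 + Gq ^ 2) / 2)) := by
    apply mul_le_mul_of_nonneg_left hsum (by positivity)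
  calc R θbar q - R θ qbar ≤ _ := hgap
    _ ≤ _ := hmul
    _ = (A 1 + B 1 + Gθ ^ 2 + Gq ^ 2) / (2 * Real.sqrt T) := hfinal
    _ = (‖θseq 1 - θ‖ ^ 2 + ‖qseq 1 - q‖ ^ 2 + Gθ ^ 2 + Gq ^ 2) / (2 * Real.sqrt T) := rfl
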